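/- Let G be a finite abelian group, d ≥ 1, and let X_1, …, X_d be independent uniformly random elements of G. For integer coefficient vectors p, p' ∈ ℤ^d, define events E = {Σ_i p_i·X_i = 0} and E' = {Σ_i p'_i·X_i = 0}. Then Cov(1_E, 1_{E'}) ≥ 0, i.e. P(E ∩ E') ≥ P(E)·P(E'). -/

import Mathlib

private def kerSub {G : Type*} [AddCommGroup G] [Fintype G] (d : ℕ) (p : Fin d → ℤ) :
    AddSubgroup (Fin d → G) where
  carrier := {x | ∑ i, p i • x i = 0}
  zero_mem' := by simp
  add_mem' := by
    intro a b ha hb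
    simp only [Set.mem_setOf_eq] at *
    simp [Pi.add_apply, smul_add, Finset.sum_add_distrib, ha, hb]
  neg_mem' := by
    intro a ha
    simp only [Set.mem_setOf_eq] at *
    simp [Finset.sum_neg_distrib, neg_eq_zero, ha]

theorem linear_events_positively_correlated {G : Type*} [AddCommGroup G] [Fintype G]
    (d : ℕ) (hd : 0 < d) (p p' : Fin d → ℤ) :
    ((Nat.card {x : Fin d → G // ∑ i, p i • x i = 0} : ℚ) / (Fintype.card G : ℚ) ^ d)
      * ((Nat.card {x : Fin d → G // ∑ i, p' i • x i = 0} : ℚ) / (Fintype.card G : ℚ) ^ d)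
    ≤ (Nat.card {x : Fin d → G //
          (∑ i, p i • x i = 0) ∧ (∑ i, p' i • x i = 0)} : ℚ)
        / (Fintype.card G : ℚ) ^ d := by
  set H := kerSub (G := G) d p
  set K := kerSub (G := G) d p'
  have hcard1 : Nat.card {x : Fin d → G // ∑ i, p i • x i = 0} = Nat.card H := rfl
  have hcard2 : Nat.card {x : Fin d → G // ∑ i, p' i • x i = 0} = Nat.card K := rfl
  have hcard3 : Nat.card {x : Fin d → G //
      (∑ i, p i • x i = 0) ∧ (∑ i, p' i • x i = 0)} = Nat.card (H ⊓ K : AddSubgroup (Fin d → G)) := by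
    apply Nat.card_congr
    exact Equiv.subtypeEquivRight (fun x => by
      simp [AddSubgroup.mem_inf, H, K, kerSub])
  have hN : Nat.card (Fin d → G) = Fintype.card G ^ d := by
    simp [Nat.card_eq_fintype_card]
  -- key inequality in ℕ
  have h1 : Nat.card H * H.index = Fintype.card G ^ d := by
    rw [AddSubgroup.card_mul_index, hN]
  have h2 : Nat.card K * K.index = Fintype.card G ^ d := by
    rw [AddSubgroup.card_mul_index, hN]
  have h3 : Nat.card (H ⊓ K : AddSubgroup (Fin d → G)) * (H ⊓ K).index = Fintype.card G ^ d := by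
    rw [AddSubgroup.card_mul_index, hN]
  have hle : (H ⊓ K).index ≤ H.index * K.index := AddSubgroup.index_inf_le (H := H) (K := K)
  have hkey : Nat.card H * Nat.card K ≤
      Nat.card (H ⊓ K : AddSubgroup (Fin d → G)) * Fintype.card G ^ d := by
    have hipos : 0 < (H ⊓ K).index := by
      have hpow : 0 < Fintype.card G ^ d := pow_pos Fintype.card_pos d
      by_contra hc
      push_neg at hc
      interval_cases h : (H ⊓ K).index
      · simp only [Nat.mul_zero] at h3
        exact hpow.ne' h3.symm
    have : Nat.card H * Nat.card K * (H ⊓ K).index ≤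
        Nat.card (H ⊓ K : AddSubgroup (Fin d → G)) * Fintype.card G ^ d * (H ⊓ K).index := by
      calc Nat.card H * Nat.card K * (H ⊓ K).index
          ≤ Nat.card H * Nat.card K * (H.index * K.index) := by
            exact Nat.mul_le_mul_left _ hle
        _ = (Nat.card H * H.index) * (Nat.card K * K.index) := by ring
        _ = Fintype.card G ^ d * Fintype.card G ^ d := by rw [h1, h2]
        _ = Nat.card (H ⊓ K : AddSubgroup (Fin d → G)) * (H ⊓ K).index * Fintype.card G ^ d := by
            rw [h3]
        _ = Nat.card (H ⊓ K : AddSubgroup (Fin d → G)) * Fintype.card G ^ d * (H ⊓ K).index := by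
            ring
    exact Nat.le_of_mul_le_mul_right this hipos
  rw [hcard1, hcard2, hcard3]
  have hNpos : (0 : ℚ) < (Fintype.card G : ℚ) ^ d := by
    positivity
  rw [div_mul_div_comm, div_le_div_iff₀ (by positivity) hNpos]
  have := hkey
  have hq : (Nat.card H : ℚ) * Nat.card K ≤
      (Nat.card (H ⊓ K : AddSubgroup (Fin d → G)) : ℚ) * (Fintype.card G : ℚ) ^ d := by
    exact_mod_cast hkey
  calc (Nat.card H : ℚ) * Nat.card K * (Fintype.card G : ℚ) ^ d
      ≤ (Nat.card (H ⊓ K : AddSubgroup (Fin d → G)) : ℚ) * (Fintype.card G : ℚ) ^ d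
        * (Fintype.card G : ℚ) ^ d := by
        exact mul_le_mul_of_nonneg_right hq (le_of_lt hNpos)
    _ = (Nat.card (H ⊓ K : AddSubgroup (Fin d → G)) : ℚ)
        * ((Fintype.card G : ℚ) ^ d * (Fintype.card G : ℚ) ^ d) := by ring
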